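/- Let (α,β) be a zero-one reaction network whose stoichiometric matrix N has rank one, with rows N_i = a_i N_s for 1 ≤ i ≤ s−1, and suppose every nonzero row of N changes signs. Then for every κ ∈ ℝ^m_{>0} and every positive steady state x ∈ ℝ^s_{>0}, the determinant of the s×s matrix whose i-th row, for 1 ≤ i ≤ s−1, is e_i − a_i e_s (where e_i are the standard basis row vectors of ℝ^s) and whose s-th row is the gradient ((∂f_s/∂x_1)(κ,x), …, (∂f_s/∂x_s)(κ,x)) is strictly negative. -/

import Mathlib

noncomputable section

/-- The stoichiometric matrix `N = β − α` of a reaction network, as a real matrix. -/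
def stoich {s m : ℕ} (α β : Matrix (Fin s) (Fin m) ℕ) : Matrix (Fin s) (Fin m) ℝ :=
  fun i j => (β i j : ℝ) - (α i j : ℝ)

/-- The mass-action species-formation rate function:
`f_i(κ,x) = Σ_j N_{ij} κ_j Π_l x_l^{α_{lj}}`. -/
def rateFun {s m : ℕ} (α β : Matrix (Fin s) (Fin m) ℕ)
    (κ : Fin m → ℝ) (x : Fin s → ℝ) (i : Fin s) : ℝ :=
  ∑ j, stoich α β i j * κ j * ∏ l, x l ^ (α l j)

/-- The Jacobian matrix of `f` with respect to `x`. -/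
def jacF {s m : ℕ} (α β : Matrix (Fin s) (Fin m) ℕ)
    (κ : Fin m → ℝ) (x : Fin s → ℝ) : Matrix (Fin s) (Fin s) ℝ :=
  fun i l => deriv (fun t => rateFun α β κ (Function.update x l t) i) (x l)

open Finset

/-- Determinant reduction: the determinant of the matrix with rows `e_i - a_i e_last` and
last row `g` equals `g_last + ∑ a_i g_i`. -/
lemma det_aux {n : ℕ} (a : Fin n → ℝ) (g : Fin (n + 1) → ℝ) :
    Matrix.det (Matrix.of (fun i l : Fin (n + 1) =>
      if h : i = Fin.last n then g l
      else (if l = i then (1 : ℝ) else 0) -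
        a (i.castPred h) * (if l = Fin.last n then 1 else 0)))
    = g (Fin.last n) + ∑ i : Fin n, a i * g i.castSucc := by
  set tgt := g (Fin.last n) + ∑ i : Fin n, a i * g i.castSucc with htgt
  set C : Matrix (Fin (n+1)) (Fin (n+1)) ℝ := Matrix.of (fun i l =>
    if i = Fin.last n then (if l = Fin.last n then tgt else g l)
    else (if l = i then (1:ℝ) else 0)) with hC
  set B : Matrix (Fin (n+1)) (Fin (n+1)) ℝ := Matrix.of (fun i l =>
    if h : i = Fin.last n then (if l = Fin.last n then (1:ℝ) else 0)
    else (if l = i then (1 : ℝ) else 0) -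
      a (i.castPred h) * (if l = Fin.last n then 1 else 0)) with hB
  have hcs : ∀ k : Fin n, (k.castSucc : Fin (n+1)) ≠ Fin.last n :=
    fun k => (Fin.castSucc_lt_last k).ne
  have hM : (Matrix.of (fun i l : Fin (n + 1) =>
      if h : i = Fin.last n then g l
      else (if l = i then (1 : ℝ) else 0) -
        a (i.castPred h) * (if l = Fin.last n then 1 else 0))) = C * B := by
    ext i l
    rw [Matrix.mul_apply]
    by_cases hi : i = Fin.last n
    · subst hi
      have hLHS : (Matrix.of (fun i l : Fin (n + 1) =>
          if h : i = Fin.last n then g l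
          else (if l = i then (1 : ℝ) else 0) -
            a (i.castPred h) * (if l = Fin.last n then 1 else 0))) (Fin.last n) l = g l := by
        simp only [Matrix.of_apply, dif_pos]
      rw [hLHS, Fin.sum_univ_castSucc]
      have hterm : ∀ k : Fin n, C (Fin.last n) k.castSucc * B k.castSucc l
          = g k.castSucc * ((if l = k.castSucc then (1 : ℝ) else 0) -
            a k * (if l = Fin.last n then 1 else 0)) := by
        intro k
        have h1 : C (Fin.last n) k.castSucc = g k.castSucc := by
          simp [hC, hcs k]
        have h2 : B k.castSucc l = (if l = k.castSucc then (1 : ℝ) else 0) -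
            a k * (if l = Fin.last n then 1 else 0) := by
          simp only [hB, Matrix.of_apply]
          rw [dif_neg (hcs k), Fin.castPred_castSucc]
        rw [h1, h2]
      have hlastterm : C (Fin.last n) (Fin.last n) * B (Fin.last n) l
          = tgt * (if l = Fin.last n then (1:ℝ) else 0) := by
        have h1 : C (Fin.last n) (Fin.last n) = tgt := by simp [hC]
        have h2 : B (Fin.last n) l = (if l = Fin.last n then (1:ℝ) else 0) := by
          simp [hB]
        rw [h1, h2]
      rw [Finset.sum_congr rfl (fun k _ => hterm k), hlastterm]
      by_cases hl : l = Fin.last n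
      · subst hl
        have hk2 : ∀ k : Fin n, g k.castSucc *
            ((if (Fin.last n : Fin (n+1)) = k.castSucc then (1 : ℝ) else 0) -
              a k * (if (Fin.last n : Fin (n+1)) = Fin.last n then 1 else 0))
            = -(a k * g k.castSucc) := by
          intro k
          rw [if_neg (Ne.symm (hcs k))]
          simp
          ring
        rw [Finset.sum_congr rfl (fun k _ => hk2 k), if_pos rfl, htgt,
          Finset.sum_neg_distrib]
        ring
      · obtain ⟨k0, rfl⟩ : ∃ k0 : Fin n, l = k0.castSucc := ⟨l.castPred hl, by simp⟩
        have hk2 : ∀ k : Fin n, g k.castSucc *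
            ((if (k0.castSucc : Fin (n+1)) = k.castSucc then (1 : ℝ) else 0) -
              a k * (if (k0.castSucc : Fin (n+1)) = Fin.last n then 1 else 0))
            = (if k = k0 then g k.castSucc else 0) := by
          intro k
          rw [if_neg (hcs k0)]
          by_cases hk : k = k0
          · subst hk; simp
          · have hne : (k0.castSucc : Fin (n+1)) ≠ k.castSucc :=
              fun h => hk (Fin.castSucc_injective n h).symm
            simp [hk, hne]
        rw [Finset.sum_congr rfl (fun k _ => hk2 k), if_neg (hcs k0),
          Finset.sum_ite_eq' Finset.univ k0 (fun k => g k.castSucc)]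
        simp
    · have hCrow : ∀ k : Fin (n+1), C i k * B k l = (if k = i then B k l else 0) := by
        intro k
        simp only [hC, Matrix.of_apply, if_neg hi]
        by_cases hk : k = i <;> simp [hk]
      rw [Finset.sum_congr rfl (fun k _ => hCrow k),
        Finset.sum_ite_eq' Finset.univ i (fun k => B k l)]
      simp only [Finset.mem_univ, if_pos]
      simp only [hB, Matrix.of_apply]
      rw [dif_neg hi, dif_neg hi]
  rw [hM, Matrix.det_mul]
  have hdetC : C.det = tgt := by
    have htri : C.BlockTriangular OrderDual.toDual := by
      intro i j hij
      have hij' : i < j := hij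
      have hi : i ≠ Fin.last n := by
        intro h; subst h
        exact absurd hij' (not_lt.mpr (Fin.le_last j))
      simp [hC, hi, hij'.ne']
    rw [Matrix.det_of_lowerTriangular C htri]
    rw [Fin.prod_univ_castSucc]
    have : ∀ k : Fin n, C k.castSucc k.castSucc = 1 := by
      intro k; simp [hC, hcs k]
    rw [Finset.prod_congr rfl (fun k _ => this k)]
    simp [hC]
  have hdetB : B.det = 1 := by
    have htri : B.BlockTriangular id := by
      intro i j hij
      have hij' : (j : Fin (n+1)) < i := hij
      by_cases hi : i = Fin.last n
      · subst hi
        simp [hB, hij'.ne]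
      · have hjl : j ≠ Fin.last n := by
          intro h; subst h
          exact absurd (Fin.le_last i) (not_le.mpr hij')
        simp [hB, hi, hij'.ne, hjl]
    rw [Matrix.det_of_upperTriangular htri]
    rw [Fin.prod_univ_castSucc]
    have : ∀ k : Fin n, B k.castSucc k.castSucc = 1 := by
      intro k; simp [hB, hcs k]
    rw [Finset.prod_congr rfl (fun k _ => this k)]
    simp [hB]
  rw [hdetC, hdetB, mul_one]

/-- Derivative of the monomial in one coordinate. -/
lemma hasDerivAt_monomial {s m : ℕ} (α : Matrix (Fin s) (Fin m) ℕ)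
    (x : Fin s → ℝ) (l : Fin s) (j : Fin m) :
    HasDerivAt (fun t => ∏ l', (Function.update x l t l') ^ (α l' j))
      ((∏ l' ∈ Finset.univ.erase l, x l' ^ α l' j) *
        ((α l j : ℝ) * x l ^ (α l j - 1))) (x l) := by
  have key : (fun t => ∏ l', (Function.update x l t l') ^ (α l' j))
      = fun t => (∏ l' ∈ Finset.univ.erase l, x l' ^ α l' j) * t ^ (α l j) := by
    funext t
    rw [← Finset.prod_erase_mul Finset.univ _ (Finset.mem_univ l)]
    congr 1
    · exact Finset.prod_congr rfl (fun l' hl' => by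
        rw [Function.update_of_ne (Finset.ne_of_mem_erase hl')])
    · rw [Function.update_self]
  rw [key]
  exact (hasDerivAt_pow (α l j) (x l)).const_mul _

/-- Explicit formula for the Jacobian entries. -/
lemma jacF_eq {s m : ℕ} (α β : Matrix (Fin s) (Fin m) ℕ)
    (κ : Fin m → ℝ) (x : Fin s → ℝ) (i l : Fin s) :
    jacF α β κ x i l = ∑ j, stoich α β i j * κ j *
      ((∏ l' ∈ Finset.univ.erase l, x l' ^ α l' j) *
        ((α l j : ℝ) * x l ^ (α l j - 1))) := by
  have h : HasDerivAt (fun t => rateFun α β κ (Function.update x l t) i)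
      (∑ j, stoich α β i j * κ j *
        ((∏ l' ∈ Finset.univ.erase l, x l' ^ α l' j) *
          ((α l j : ℝ) * x l ^ (α l j - 1)))) (x l) := by
    unfold rateFun
    exact HasDerivAt.fun_sum (fun j _ => (hasDerivAt_monomial α x l j).const_mul _)
  exact h.deriv

/-- For a rank-one zero-one network all of whose nonzero rows change signs, at every positive
steady state the determinant of the matrix whose first `s−1` rows are `e_i − a_i e_s` and whose
last row is the gradient of `f_s` is strictly negative. -/
theorem stmt5 {n m : ℕ} (α β : Matrix (Fin (n + 1)) (Fin m) ℕ)
    (hnet : ∀ j, ∃ i, α i j ≠ β i j)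
    (h01 : ∀ i j, α i j ≤ 1 ∧ β i j ≤ 1)
    (hrank : (stoich α β).rank = 1)
    (a : Fin n → ℝ)
    (ha : ∀ (i : Fin n) (j : Fin m),
      stoich α β i.castSucc j = a i * stoich α β (Fin.last n) j)
    (hsign : ∀ i : Fin (n + 1), (∃ j, stoich α β i j ≠ 0) →
      (∃ j, 0 < stoich α β i j) ∧ (∃ j, stoich α β i j < 0))
    (κ : Fin m → ℝ) (hκ : ∀ j, 0 < κ j)
    (x : Fin (n + 1) → ℝ) (hx : ∀ i, 0 < x i)
    (hss : ∀ i, rateFun α β κ x i = 0) :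
    Matrix.det (Matrix.of (fun i l : Fin (n + 1) =>
      if h : i = Fin.last n then jacF α β κ x (Fin.last n) l
      else (if l = i then (1 : ℝ) else 0) -
        a (i.castPred h) * (if l = Fin.last n then 1 else 0))) < 0 := by
  rw [det_aux a (jacF α β κ x (Fin.last n))]
  set c : Fin (n+1) → ℝ := Fin.snoc a 1 with hc
  -- the coefficient vector, with c_last = 1
  have hcrow : ∀ (l : Fin (n+1)) (j : Fin m),
      stoich α β l j = c l * stoich α β (Fin.last n) j := by
    intro l j
    induction l using Fin.lastCases with
    | last => simp [hc]
    | cast i => rw [ha i j]; simp [hc]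
  -- the double-sum expression
  set D : Fin (n+1) → Fin m → ℝ := fun l j =>
    (∏ l' ∈ Finset.univ.erase l, x l' ^ α l' j) * ((α l j : ℝ) * x l ^ (α l j - 1))
    with hD
  have hkey : jacF α β κ x (Fin.last n) (Fin.last n) +
      ∑ i : Fin n, a i * jacF α β κ x (Fin.last n) i.castSucc
      = ∑ l : Fin (n+1), ∑ j, c l * (stoich α β (Fin.last n) j * κ j * D l j) := by
    rw [Fin.sum_univ_castSucc]
    simp only [hc, Fin.snoc_castSucc, Fin.snoc_last]
    rw [jacF_eq, add_comm]
    congr 1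
    · refine Finset.sum_congr rfl (fun i _ => ?_)
      rw [jacF_eq, Finset.mul_sum]
    · refine Finset.sum_congr rfl (fun j _ => ?_)
      simp only [hD, one_mul]
  rw [hkey]
  -- nonnegativity of the monomial factors
  have hDnn : ∀ l j, 0 ≤ D l j := by
    intro l j
    apply mul_nonneg
    · exact Finset.prod_nonneg (fun l' _ => pow_nonneg (hx l').le _)
    · exact mul_nonneg (Nat.cast_nonneg _) (pow_nonneg (hx l).le _)
  -- every term is nonpositive
  have hT : ∀ l j, c l * (stoich α β (Fin.last n) j * κ j * D l j) ≤ 0 := by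
    intro l j
    by_cases hα : α l j = 0
    · simp [hD, hα]
    · have h1 : 1 ≤ α l j := Nat.one_le_iff_ne_zero.mpr hα
      have hst : stoich α β l j ≤ 0 := by
        have hβ : (β l j : ℝ) ≤ 1 := by exact_mod_cast (h01 l j).2
        have hα' : (1 : ℝ) ≤ (α l j : ℝ) := by exact_mod_cast h1
        simp only [stoich]; linarith
      have : c l * (stoich α β (Fin.last n) j * κ j * D l j)
          = stoich α β l j * (κ j * D l j) := by
        rw [hcrow l j]; ring
      rw [this]
      exact mul_nonpos_of_nonpos_of_nonneg hst (mul_nonneg (hκ j).le (hDnn l j))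
  -- the last row is nonzero
  have hrow : ∃ j, stoich α β (Fin.last n) j ≠ 0 := by
    by_contra h
    push_neg at h
    have hzero : stoich α β = 0 := by
      ext i j
      induction i using Fin.lastCases with
      | last => simpa using h j
      | cast i => simp [ha i j, h j]
    rw [hzero, Matrix.rank_zero] at hrank
    exact absurd hrank.symm one_ne_zero
  obtain ⟨j0, hneg⟩ := (hsign (Fin.last n) hrow).2
  -- α_{last,j0} = 1, so the (last, j0) term is strictly negative
  have hα1 : α (Fin.last n) j0 = 1 := by
    have h1 : (β (Fin.last n) j0 : ℝ) < (α (Fin.last n) j0 : ℝ) := by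
      simp only [stoich] at hneg; linarith
    have h2 : β (Fin.last n) j0 < α (Fin.last n) j0 := by exact_mod_cast h1
    have h3 := (h01 (Fin.last n) j0).1
    omega
  have hstrict : c (Fin.last n) * (stoich α β (Fin.last n) j0 * κ j0 *
      D (Fin.last n) j0) < 0 := by
    have hclast : c (Fin.last n) = 1 := by simp [hc]
    have hDpos : 0 < D (Fin.last n) j0 := by
      rw [hD]
      apply mul_pos
      · exact Finset.prod_pos (fun l' _ => pow_pos (hx l') _)
      · rw [hα1]; simpa using zero_lt_one
    rw [hclast, one_mul]
    exact mul_neg_of_neg_of_pos (mul_neg_of_neg_of_pos hneg (hκ j0)) hDpos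
  -- conclude
  have hinner : ∀ l : Fin (n+1),
      ∑ j, c l * (stoich α β (Fin.last n) j * κ j * D l j) ≤ 0 :=
    fun l => Finset.sum_nonpos (fun j _ => hT l j)
  have hinner_strict :
      ∑ j, c (Fin.last n) * (stoich α β (Fin.last n) j * κ j * D (Fin.last n) j) < 0 := by
    calc ∑ j, c (Fin.last n) * (stoich α β (Fin.last n) j * κ j * D (Fin.last n) j)
        < ∑ _j : Fin m, (0:ℝ) := Finset.sum_lt_sum (fun j _ => hT (Fin.last n) j)
          ⟨j0, Finset.mem_univ j0, hstrict⟩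
      _ = 0 := by simp
  calc ∑ l : Fin (n+1), ∑ j, c l * (stoich α β (Fin.last n) j * κ j * D l j)
      < ∑ _l : Fin (n+1), (0:ℝ) := Finset.sum_lt_sum (fun l _ => hinner l)
        ⟨Fin.last n, Finset.mem_univ _, hinner_strict⟩
    _ = 0 := by simp
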